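/- Let G be a connected finite simple graph, and let {x₁, y₁} and {x₂, y₂} be two pairs of distinct vertices of G such that x₁ and x₂ lie in the same biconnected component of G and y₁ and y₂ lie in the same biconnected component of G. Let P₁ be any path from x₁ to y₁ in G and let P₂ be any path from x₂ to y₂ in G. Then: (1) a bridge uv of G belongs to P₁ (i.e., uv is an edge of P₁) if and only if uv belongs to P₂; and (2) a biconnected component Q of G is crossed by P₁ (i.e., V(Q) ∩ V(P₁) ≠ ∅) if and only if Q is crossed by P₂. -/

import Mathlib

open SimpleGraph

/-- The graph obtained from `G` by deleting all its bridges; its connected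
components are the biconnected components of `G`. -/
def bicompGraph {α : Type*} (G : SimpleGraph α) : SimpleGraph α :=
  G.deleteEdges {e | G.IsBridge e}

lemma reach_of_not_mem {α : Type*} {G : SimpleGraph α} {x y : α} (P : G.Walk x y)
    {e : Sym2 α} (he : e ∉ P.edges) : (G.deleteEdges {e}).Reachable x y :=
  ⟨P.toDeleteEdges {e} (fun e' h' => by
    simp only [Set.mem_singleton_iff]
    rintro rfl; exact he h')⟩

lemma not_reach_of_mem {α : Type*} {G : SimpleGraph α} {x y : α} (P : G.Walk x y)
    (hP : P.IsPath) {e : Sym2 α} (he : G.IsBridge e) (hm : e ∈ P.edges) :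
    ¬ (G.deleteEdges {e}).Reachable x y := by
  induction P with
  | nil => simp at hm
  | @cons u w y h q ih =>
    rw [SimpleGraph.Walk.edges_cons, List.mem_cons] at hm
    rcases hm with rfl | hm
    · have hnq : s(u, w) ∉ q.edges := by
        have := hP.edges_nodup
        rw [SimpleGraph.Walk.edges_cons, List.nodup_cons] at this
        exact this.1
      have hr : (G.deleteEdges {s(u, w)}).Reachable w y := reach_of_not_mem q hnq
      rw [SimpleGraph.isBridge_iff] at he
      intro hxy
      exact he (hxy.trans hr.symm)
    · have hne : s(u, w) ≠ e := by
        have := hP.edges_nodup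
        rw [SimpleGraph.Walk.edges_cons, List.nodup_cons] at this
        rintro rfl; exact this.1 hm
      have hadj : (G.deleteEdges {e}).Adj u w := by
        rw [SimpleGraph.deleteEdges_adj]
        exact ⟨h, by simpa using hne⟩
      intro hxy
      exact ih hP.of_cons hm (hadj.symm.reachable.trans hxy)

lemma bridge_mem_iff {α : Type*} {G : SimpleGraph α} {x y : α} (P : G.Walk x y)
    (hP : P.IsPath) {e : Sym2 α} (he : G.IsBridge e) :
    e ∈ P.edges ↔ ¬ (G.deleteEdges {e}).Reachable x y := by
  constructor
  · exact not_reach_of_mem P hP he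
  · intro h
    by_contra hmem
    exact h (reach_of_not_mem P hmem)

lemma cross_bridge {α : Type*} {G : SimpleGraph α} {x y : α} (W : G.Walk x y)
    (C : (bicompGraph G).ConnectedComponent)
    (hC : C ≠ (bicompGraph G).connectedComponentMk x)
    {v : α} (hv : v ∈ W.support) (hvC : (bicompGraph G).connectedComponentMk v = C) :
    ∃ a b, G.IsBridge s(a, b) ∧ s(a, b) ∈ W.edges ∧
      (bicompGraph G).connectedComponentMk b = C := by
  induction W with
  | nil =>
    rw [SimpleGraph.Walk.support_nil, List.mem_singleton] at hv
    subst hv; exact absurd hvC.symm hC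
  | @cons u w y h q ih =>
    rw [SimpleGraph.Walk.support_cons, List.mem_cons] at hv
    rcases hv with rfl | hv
    · exact absurd hvC.symm hC
    · by_cases hw : (bicompGraph G).connectedComponentMk w = C
      · by_cases hb : G.IsBridge s(u, w)
        · exact ⟨u, w, hb, by simp, hw⟩
        · exfalso
          have hadj : (bicompGraph G).Adj u w := by
            rw [bicompGraph, SimpleGraph.deleteEdges_adj]
            exact ⟨h, hb⟩
          have : (bicompGraph G).connectedComponentMk u = C := by
            rw [← hw]
            exact SimpleGraph.ConnectedComponent.sound hadj.reachable
          exact hC this.symm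
      · obtain ⟨a, b, hb, hmem, hbC⟩ := ih (fun h => hw h.symm) hv
        exact ⟨a, b, hb, by simp [hmem], hbC⟩

theorem stmt1 {α : Type*} [Fintype α] (G : SimpleGraph α) (hG : G.Connected)
    (x₁ y₁ x₂ y₂ : α) (h₁ : x₁ ≠ y₁) (h₂ : x₂ ≠ y₂)
    (hx : (bicompGraph G).connectedComponentMk x₁ = (bicompGraph G).connectedComponentMk x₂)
    (hy : (bicompGraph G).connectedComponentMk y₁ = (bicompGraph G).connectedComponentMk y₂)
    (P₁ : G.Walk x₁ y₁) (hP₁ : P₁.IsPath) (P₂ : G.Walk x₂ y₂) (hP₂ : P₂.IsPath) :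
    (∀ e : Sym2 α, G.IsBridge e → (e ∈ P₁.edges ↔ e ∈ P₂.edges)) ∧
    (∀ C : (bicompGraph G).ConnectedComponent,
      ((∃ v ∈ C.supp, v ∈ P₁.support) ↔ (∃ v ∈ C.supp, v ∈ P₂.support))) := by
  have part1 : ∀ e : Sym2 α, G.IsBridge e → (e ∈ P₁.edges ↔ e ∈ P₂.edges) := by
    intro e he
    have hle : bicompGraph G ≤ G.deleteEdges {e} :=
      SimpleGraph.deleteEdges_anti (Set.singleton_subset_iff.2 he)
    have rx : (G.deleteEdges {e}).Reachable x₁ x₂ :=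
      (SimpleGraph.ConnectedComponent.exact hx).mono hle
    have ry : (G.deleteEdges {e}).Reachable y₁ y₂ :=
      (SimpleGraph.ConnectedComponent.exact hy).mono hle
    rw [bridge_mem_iff P₁ hP₁ he, bridge_mem_iff P₂ hP₂ he]
    constructor
    · intro h hr; exact h ((rx.trans hr).trans ry.symm)
    · intro h hr; exact h ((rx.symm.trans hr).trans ry)
  refine ⟨part1, fun C => ?_⟩
  constructor
  · rintro ⟨v, hvC, hvP⟩
    rw [SimpleGraph.ConnectedComponent.mem_supp_iff] at hvC
    by_cases hCx : C = (bicompGraph G).connectedComponentMk x₁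
    · refine ⟨x₂, ?_, P₂.start_mem_support⟩
      rw [SimpleGraph.ConnectedComponent.mem_supp_iff, ← hx, ← hCx]
    · obtain ⟨a, b, hb, hmem, hbC⟩ := cross_bridge P₁ C hCx hvP hvC
      refine ⟨b, ?_, P₂.snd_mem_support_of_mem_edges ((part1 _ hb).1 hmem)⟩
      rw [SimpleGraph.ConnectedComponent.mem_supp_iff, hbC]
  · rintro ⟨v, hvC, hvP⟩
    rw [SimpleGraph.ConnectedComponent.mem_supp_iff] at hvC
    by_cases hCx : C = (bicompGraph G).connectedComponentMk x₂
    · refine ⟨x₁, ?_, P₁.start_mem_support⟩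
      rw [SimpleGraph.ConnectedComponent.mem_supp_iff, hx, ← hCx]
    · obtain ⟨a, b, hb, hmem, hbC⟩ := cross_bridge P₂ C hCx hvP hvC
      refine ⟨b, ?_, P₁.snd_mem_support_of_mem_edges ((part1 _ hb).2 hmem)⟩
      rw [SimpleGraph.ConnectedComponent.mem_supp_iff, hbC]
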